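/- Let a < b, let V ⊆ ℝ be an open set with λ(V ∩ [a,b]) < b - a and a ∉ V, b ∉ V, let n ≥ 1, and let h be affine on [a,b] with slope m > 1. Set α = λ([a,b]\V) and define f on [a,b] by f(x) = h(a) + ((m - 2^{-n+1})(b-a)/α + 2^{-n})·λ([a,x]\V) + 2^{-n}·λ([a,x] ∩ V). Then f is increasing (nondecreasing) on [a,b], f(a) = h(a), f is affine with slope 2^{-n} on each connected component of (a,b) ∩ V, and f is Lipschitz on [a,b]. -/

import Mathlib

open Set Filter MeasureTheory Topology
open scoped ENNReal NNReal

/-- `M_f(x,r) = sup { |f(x)-f(y)|/r : |x-y| ≤ r }`, valued in `[0,∞]`. -/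
noncomputable def Mf (f : ℝ → ℝ) (x r : ℝ) : ℝ≥0∞ :=
  ⨆ y ∈ {y : ℝ | |x - y| ≤ r}, ENNReal.ofReal (|f x - f y| / r)

/-- The big Lip function: `Lip f(x) = limsup_{r→0⁺} M_f(x,r)`. -/
noncomputable def bigLip (f : ℝ → ℝ) (x : ℝ) : ℝ≥0∞ :=
  Filter.limsup (fun r => Mf f x r) (𝓝[>] (0 : ℝ))

/-- The little lip function: `lip f(x) = liminf_{r→0⁺} M_f(x,r)`. -/
noncomputable def litLip (f : ℝ → ℝ) (x : ℝ) : ℝ≥0∞ :=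
  Filter.liminf (fun r => Mf f x r) (𝓝[>] (0 : ℝ))

/-- A set `E ⊆ ℝ` is trim if `λ(E ∩ (a,b)) < b - a` for every open interval `(a,b)`. -/
def Trim (E : Set ℝ) : Prop :=
  ∀ a b : ℝ, a < b → volume (E ∩ Ioo a b) < ENNReal.ofReal (b - a)

/-- Lemma: redistribution of an affine function of slope `m > 1` relative to a trim open
set `V`, producing an increasing Lipschitz function of slope `2^{-n}` on components of `V`. -/
theorem affine_redistribution_lemma (a b : ℝ) (hab : a < b)
    (V : Set ℝ) (hVopen : IsOpen V)
    (hVmeas : volume (V ∩ Icc a b) < ENNReal.ofReal (b - a))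
    (haV : a ∉ V) (hbV : b ∉ V)
    (n : ℕ) (hn : 1 ≤ n) (h f : ℝ → ℝ) (m : ℝ) (hm : 1 < m)
    (hh : ∀ x ∈ Icc a b, h x = h a + m * (x - a))
    (α : ℝ) (hα : α = (volume (Icc a b \ V)).toReal)
    (hf : ∀ x ∈ Icc a b,
      f x = h a + ((m - (2 : ℝ) ^ (1 - (n : ℤ))) * (b - a) / α + (2 : ℝ) ^ (-(n : ℤ))) *
          (volume (Icc a x \ V)).toReal +
        (2 : ℝ) ^ (-(n : ℤ)) * (volume (Icc a x ∩ V)).toReal) :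
    MonotoneOn f (Icc a b) ∧
    f a = h a ∧
    (∀ r s : ℝ, Ioo r s ⊆ Ioo a b ∩ V →
      ∀ x ∈ Ioo r s, ∀ y ∈ Ioo r s, f y - f x = (2 : ℝ) ^ (-(n : ℤ)) * (y - x)) ∧
    (∃ K : ℝ≥0, LipschitzOnWith K f (Icc a b)) := by
  set c : ℝ := (m - (2 : ℝ) ^ (1 - (n : ℤ))) * (b - a) / α + (2 : ℝ) ^ (-(n : ℤ)) with hc_def
  set d : ℝ := (2 : ℝ) ^ (-(n : ℤ)) with hd_def
  have hd : 0 < d := zpow_pos two_pos _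
  have hα0 : 0 ≤ α := hα ▸ ENNReal.toReal_nonneg
  have h2le : (2 : ℝ) ^ (1 - (n : ℤ)) ≤ 1 := by
    calc (2 : ℝ) ^ (1 - (n : ℤ)) ≤ (2 : ℝ) ^ (0 : ℤ) :=
          zpow_le_zpow_right₀ one_le_two (by omega)
      _ = 1 := by norm_num
  have hc : d ≤ c := by
    have : 0 ≤ (m - (2 : ℝ) ^ (1 - (n : ℤ))) * (b - a) / α :=
      div_nonneg (mul_nonneg (by linarith) (by linarith)) hα0
    simp only [hc_def]; linarith
  have hc0 : 0 ≤ c := le_trans hd.le hc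
  -- finiteness
  have hfin : ∀ (x y : ℝ) (S : Set ℝ), S ⊆ Icc x y → volume S ≠ ⊤ := by
    intro x y S hS
    exact ((measure_mono hS).trans_lt measure_Icc_lt_top).ne
  -- splitting lemma
  have hsplit : ∀ x y : ℝ, a ≤ x → x ≤ y → ∀ S : Set ℝ, MeasurableSet S →
      (volume (Icc a y ∩ S)).toReal
        = (volume (Icc a x ∩ S)).toReal + (volume (Ioc x y ∩ S)).toReal := by
    intro x y hax hxy S hS
    have hunion : Icc a y ∩ S = (Icc a x ∩ S) ∪ (Ioc x y ∩ S) := by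
      rw [← Set.Icc_union_Ioc_eq_Icc hax hxy, Set.union_inter_distrib_right]
    have hdisj : Disjoint (Icc a x ∩ S) (Ioc x y ∩ S) :=
      ((Set.Iic_disjoint_Ioc le_rfl).mono Set.Icc_subset_Iic_self le_rfl).mono Set.inter_subset_left Set.inter_subset_left
    rw [hunion, measure_union hdisj (measurableSet_Ioc.inter hS),
      ENNReal.toReal_add (hfin a x _ Set.inter_subset_left)
        (hfin x y _ (Set.inter_subset_left.trans Set.Ioc_subset_Icc_self))]
  -- key formula
  have key : ∀ x ∈ Icc a b, ∀ y ∈ Icc a b, x ≤ y →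
      f y - f x = c * (volume (Ioc x y \ V)).toReal + d * (volume (Ioc x y ∩ V)).toReal := by
    intro x hx y hy hxy
    have h1 := hsplit x y hx.1 hxy Vᶜ hVopen.measurableSet.compl
    have h2 := hsplit x y hx.1 hxy V hVopen.measurableSet
    simp only [← Set.diff_eq] at h1
    rw [hf y hy, hf x hx, h1, h2]; ring
  -- monotone
  have hmono : MonotoneOn f (Icc a b) := by
    intro x hx y hy hxy
    have hk := key x hx y hy hxy
    have n1 : (0:ℝ) ≤ (volume (Ioc x y \ V)).toReal := ENNReal.toReal_nonneg
    have n2 : (0:ℝ) ≤ (volume (Ioc x y ∩ V)).toReal := ENNReal.toReal_nonneg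
    nlinarith
  refine ⟨hmono, ?_, ?_, ?_⟩
  · -- f a = h a
    have hzero : volume (Icc a a) = 0 := by simp [Real.volume_Icc]
    have hz1 : volume (Icc a a \ V) = 0 :=
      le_antisymm (hzero ▸ measure_mono Set.diff_subset) zero_le
    have hz2 : volume (Icc a a ∩ V) = 0 :=
      le_antisymm (hzero ▸ measure_mono Set.inter_subset_left) zero_le
    rw [hf a (Set.left_mem_Icc.2 hab.le), hz1, hz2]; simp
  · -- affine on components of V
    intro r s hrs x hx y hy
    have hsub : Ioo r s ⊆ Icc a b := fun z hz => Set.Ioo_subset_Icc_self (hrs hz).1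
    have haux : ∀ u ∈ Ioo r s, ∀ v ∈ Ioo r s, u ≤ v → f v - f u = d * (v - u) := by
      intro u hu v hv huv
      have hIoc : Ioc u v ⊆ V := fun z hz =>
        (hrs ⟨hu.1.trans_le hz.1.le, hz.2.trans_lt hv.2⟩).2
      have hd1 : Ioc u v \ V = ∅ := Set.diff_eq_empty.2 hIoc
      have hd2 : Ioc u v ∩ V = Ioc u v := Set.inter_eq_left.2 hIoc
      rw [key u (hsub hu) v (hsub hv) huv, hd1, hd2]
      simp [Real.volume_Ioc, ENNReal.toReal_ofReal (by linarith : (0:ℝ) ≤ v - u)]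
    rcases le_total x y with hxy | hxy
    · exact haux x hx y hy hxy
    · have := haux y hy x hx hxy
      simp only [hd_def] at this ⊢
      linarith
  · -- Lipschitz
    refine ⟨(c + d).toNNReal, LipschitzOnWith.of_dist_le_mul fun x hx y hy => ?_⟩
    have hbound : ∀ u ∈ Icc a b, ∀ v ∈ Icc a b, u ≤ v → f v - f u ≤ (c + d) * (v - u) := by
      intro u hu v hv huv
      have b1 : (volume (Ioc u v \ V)).toReal ≤ v - u := by
        have : volume (Ioc u v \ V) ≤ ENNReal.ofReal (v - u) := by
          rw [← Real.volume_Ioc (a := u) (b := v)]; exact measure_mono Set.diff_subset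
        calc (volume (Ioc u v \ V)).toReal ≤ (ENNReal.ofReal (v - u)).toReal :=
              ENNReal.toReal_mono ENNReal.ofReal_ne_top this
          _ ≤ v - u := by rw [ENNReal.toReal_ofReal']; exact max_le le_rfl (by linarith)
      have b2 : (volume (Ioc u v ∩ V)).toReal ≤ v - u := by
        have : volume (Ioc u v ∩ V) ≤ ENNReal.ofReal (v - u) := by
          rw [← Real.volume_Ioc (a := u) (b := v)]; exact measure_mono Set.inter_subset_left
        calc (volume (Ioc u v ∩ V)).toReal ≤ (ENNReal.ofReal (v - u)).toReal :=
              ENNReal.toReal_mono ENNReal.ofReal_ne_top this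
          _ ≤ v - u := by rw [ENNReal.toReal_ofReal']; exact max_le le_rfl (by linarith)
      have n1 : (0:ℝ) ≤ (volume (Ioc u v \ V)).toReal := ENNReal.toReal_nonneg
      have n2 : (0:ℝ) ≤ (volume (Ioc u v ∩ V)).toReal := ENNReal.toReal_nonneg
      rw [key u hu v hv huv]
      nlinarith
    have hcoe : ((c + d).toNNReal : ℝ) = c + d := Real.coe_toNNReal _ (by linarith)
    rw [Real.dist_eq, Real.dist_eq, hcoe]
    rcases le_total x y with hxy | hxy
    · have h1 := hbound x hx y hy hxy
      have h2 := hmono hx hy hxy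
      rw [abs_of_nonpos (by linarith), abs_of_nonpos (by linarith)]
      linarith
    · have h1 := hbound y hy x hx hxy
      have h2 := hmono hy hx hxy
      rw [abs_of_nonneg (by linarith), abs_of_nonneg (by linarith)]
      linarith
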